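/- Let E' ≤ E be wald topologies (split systems) with induced leaf partitions L_1,...,L_K and L'_1,...,L'_{K'} respectively. If K = K', then (after relabeling) L'_α = L_α for all α, E'_α ⊆ E_α for all α, and R_{e'} = {e'} for every e' ∈ E'. -/
import Mathlib


attribute [local instance] Classical.propDecidable

/-- A split: an unordered pair of finite sets of labels. -/
abbrev Split (N : ℕ) := Sym2 (Finset (Fin N))

namespace Wald

variable {N : ℕ}

/-- `e` is a split of the block `M`: `e = {A, B}` with `A, B` a partition of `M`
into two nonempty parts. -/
def IsSplitOf (e : Split N) (M : Finset (Fin N)) : Prop :=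
  ∃ A B : Finset (Fin N), e = s(A, B) ∧ A ∪ B = M ∧ Disjoint A B ∧
    A.Nonempty ∧ B.Nonempty

/-- Two splits `A|B` and `C|D` are compatible if one of the four intersections
`A∩C, A∩D, B∩C, B∩D` is empty. -/
def Compatible (e f : Split N) : Prop :=
  ∃ A B C D : Finset (Fin N), e = s(A, B) ∧ f = s(C, D) ∧
    (A ∩ C = ∅ ∨ A ∩ D = ∅ ∨ B ∩ C = ∅ ∨ B ∩ D = ∅)

/-- The split `e = A|B` separates `u` and `v` if `u ∈ A` and `v ∈ B` (or vice versa). -/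
def Separates (e : Split N) (u v : Fin N) : Prop :=
  ∃ A B : Finset (Fin N), e = s(A, B) ∧ u ∈ A ∧ v ∈ B

/-- The restriction `e|_{L'}` of a split `e = A|B`: `(A ∩ L')|(B ∩ L')`. -/
def restrict (e : Split N) (L' : Finset (Fin N)) : Split N :=
  Sym2.map (· ∩ L') e

/-- The underlying block `A ∪ B` of a split `e = A|B`. -/
def blockOf (e : Split N) : Finset (Fin N) :=
  Sym2.lift ⟨fun A B => A ∪ B, fun _ _ => Finset.union_comm _ _⟩ e

/-- The restriction of `e = A|B` to `L'` is a valid split iff both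
`A ∩ L'` and `B ∩ L'` are nonempty. -/
def ValidRestrict (e : Split N) (L' : Finset (Fin N)) : Prop :=
  ∃ A B : Finset (Fin N), e = s(A, B) ∧ (A ∩ L').Nonempty ∧ (B ∩ L').Nonempty

/-- A wald topology on the label set `{1,…,N}`: a partition of the labels into
blocks, together with a set of splits of the blocks, such that splits of a common
block are pairwise compatible and any two distinct labels of a common block are
separated by some split. -/
structure WaldTop (N : ℕ) where
  blocks : Finset (Finset (Fin N))
  splits : Finset (Split N)
  nonempty_blocks : ∀ B ∈ blocks, B.Nonempty
  cover : ∀ u : Fin N, ∃! B, B ∈ blocks ∧ u ∈ B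
  split_mem : ∀ e ∈ splits, ∃ B ∈ blocks, IsSplitOf e B
  compat : ∀ e ∈ splits, ∀ f ∈ splits, blockOf e = blockOf f → Compatible e f
  separating : ∀ B ∈ blocks, ∀ u ∈ B, ∀ v ∈ B, u ≠ v →
    ∃ e ∈ splits, Separates e u v

/-- The partial order `E' ≤ E` on wald topologies: refinement of the leaf
partitions, restriction of splits, and the cut property. -/
def LE' (E' E : WaldTop N) : Prop :=
  (∀ B' ∈ E'.blocks, ∃ B ∈ E.blocks, B' ⊆ B) ∧
  (∀ e' ∈ E'.splits, ∃ e ∈ E.splits, restrict e (blockOf e') = e') ∧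
  (∀ B₁ ∈ E'.blocks, ∀ B₂ ∈ E'.blocks, B₁ ≠ B₂ →
    ∀ B ∈ E.blocks, B₁ ⊆ B → B₂ ⊆ B →
      ∃ A C : Finset (Fin N), s(A, C) ∈ E.splits ∧ B₁ ⊆ A ∧ B₂ ⊆ C)

/-- `R_{e'}`: the splits of `E` whose restriction to the block of `e'` equals `e'`. -/
def Rset (E : WaldTop N) (e' : Split N) : Set (Split N) :=
  {e | e ∈ E.splits ∧ restrict e (blockOf e') = e'}

/-- `R_dis`: the splits of `E` admitting a valid restriction to some block of `E'`
which does not belong to `E'`. -/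
def Rdis (E' E : WaldTop N) : Set (Split N) :=
  {e | e ∈ E.splits ∧ ∃ B' ∈ E'.blocks, ValidRestrict e B' ∧ restrict e B' ∉ E'.splits}

/-- `R_cut`: the splits of `E` admitting no valid restriction to any block of `E'`. -/
def Rcut (E' E : WaldTop N) : Set (Split N) :=
  {e | e ∈ E.splits ∧ ∀ B' ∈ E'.blocks, ¬ ValidRestrict e B'}

/-- `E(u,v)`: the set of splits of `E` separating `u` and `v`. -/
def sepSet (E : WaldTop N) (u v : Fin N) : Set (Split N) :=
  {e | e ∈ E.splits ∧ Separates e u v}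

end Wald

open Wald in
/-- If `E' ≤ E` are wald topologies with the same number of blocks,
then the blocks agree, `E' ⊆ E` as split systems, and `R_{e'} = {e'}` for every
`e' ∈ E'`. -/
theorem stmt_7 {N : ℕ} (E' E : WaldTop N) (h : LE' E' E)
    (hK : E'.blocks.card = E.blocks.card) :
    E'.blocks = E.blocks ∧ (E'.splits : Set (Split N)) ⊆ E.splits ∧
    ∀ e' ∈ E'.splits, Rset E e' = {e'} := by
  classical
  -- uniqueness of E-block containing a given label
  have huniq : ∀ B₁ ∈ E.blocks, ∀ B₂ ∈ E.blocks, ∀ u : Fin N, u ∈ B₁ → u ∈ B₂ → B₁ = B₂ := by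
    intro B₁ h₁ B₂ h₂ u hu₁ hu₂
    obtain ⟨B, _, hBuniq⟩ := E.cover u
    rw [hBuniq B₁ ⟨h₁, hu₁⟩, hBuniq B₂ ⟨h₂, hu₂⟩]
  have hex : ∀ B' ∈ E'.blocks, ∃ B, B ∈ E.blocks ∧ B' ⊆ B := by
    intro B' hB'
    obtain ⟨B, hB, hsub⟩ := h.1 B' hB'
    exact ⟨B, hB, hsub⟩
  -- the containing-block map
  let f : ∀ B' ∈ E'.blocks, Finset (Fin N) := fun B' hB' => (hex B' hB').choose
  have hfmem : ∀ B' hB', f B' hB' ∈ E.blocks := fun B' hB' => (hex B' hB').choose_spec.1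
  have hfsub : ∀ B' hB', B' ⊆ f B' hB' := fun B' hB' => (hex B' hB').choose_spec.2
  -- f is surjective
  have hsurj : ∀ B ∈ E.blocks, ∃ B' hB', f B' hB' = B := by
    intro B hB
    obtain ⟨u, hu⟩ := E.nonempty_blocks B hB
    obtain ⟨B'', ⟨hB'', hu''⟩, _⟩ := E'.cover u
    refine ⟨B'', hB'', ?_⟩
    exact huniq _ (hfmem B'' hB'') _ hB u (hfsub B'' hB'' hu'') hu
  have hinj := Finset.inj_on_of_surj_on_of_card_le f hfmem hsurj (le_of_eq hK)
  -- every block of E' is a block of E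
  have hblsub : E'.blocks ⊆ E.blocks := by
    intro B' hB'
    have hBeq : B' = f B' hB' := by
      apply Finset.Subset.antisymm (hfsub B' hB')
      intro u hu
      obtain ⟨B'', ⟨hB'', hu''⟩, _⟩ := E'.cover u
      have : f B'' hB'' = f B' hB' :=
        huniq _ (hfmem B'' hB'') _ (hfmem B' hB') u (hfsub B'' hB'' hu'') hu
      have := hinj hB'' hB' this
      rwa [← this]
    rw [hBeq]; exact hfmem B' hB'
  have hblocks : E'.blocks = E.blocks :=
    Finset.eq_of_subset_of_card_le hblsub (le_of_eq hK.symm)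
  -- key: any split of E restricting to e' on blockOf e' equals e'
  have key : ∀ e' ∈ E'.splits, ∀ e ∈ E.splits, restrict e (blockOf e') = e' → e = e' := by
    intro e' he' e he hre
    obtain ⟨B'', hB'', A', C', heq', hun', _, hA', hC'⟩ := E'.split_mem e' he'
    obtain ⟨B, hB, A, C, heq, hun, _, _, _⟩ := E.split_mem e he
    have hblk' : blockOf e' = B'' := by rw [heq']; simpa [blockOf] using hun'
    have hblk : blockOf e = B := by rw [heq]; simpa [blockOf] using hun
    have hre2 : s(A ∩ B'', C ∩ B'') = s(A', C') := by
      rw [← heq', ← hre, heq, hblk', restrict, Sym2.map_pair_eq]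
    -- A ∩ B'' is nonempty in either case
    have hAB : (A ∩ B'').Nonempty := by
      rcases Sym2.eq_iff.mp hre2 with ⟨h1, _⟩ | ⟨h1, _⟩
      · rw [h1]; exact hA'
      · rw [h1]; exact hC'
    obtain ⟨u, hu⟩ := hAB
    have huA : u ∈ A := (Finset.mem_inter.mp hu).1
    have huB'' : u ∈ B'' := (Finset.mem_inter.mp hu).2
    have hBeq : B = B'' := by
      refine huniq B hB B'' ?_ u (hun ▸ Finset.mem_union_left _ huA) huB''
      rw [← hblocks]; exact hB''
    have hAsub : A ⊆ B'' := hBeq ▸ hun ▸ Finset.subset_union_left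
    have hCsub : C ⊆ B'' := hBeq ▸ hun ▸ Finset.subset_union_right
    have : restrict e (blockOf e') = e := by
      rw [heq, hblk', restrict, Sym2.map_pair_eq,
        Finset.inter_eq_left.mpr hAsub, Finset.inter_eq_left.mpr hCsub]
    rw [← this, hre]
  -- splits of E' are splits of E
  have hsplits : ∀ e' ∈ E'.splits, e' ∈ E.splits := by
    intro e' he'
    obtain ⟨e, he, hre⟩ := h.2.1 e' he'
    have := key e' he' e he hre
    rwa [← this]
  refine ⟨hblocks, fun e' he' => hsplits e' he', ?_⟩
  intro e' he'
  ext e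
  simp only [Rset, Set.mem_setOf_eq, Set.mem_singleton_iff]
  constructor
  · rintro ⟨he, hre⟩
    exact key e' he' e he hre
  · rintro rfl
    refine ⟨hsplits e he', ?_⟩
    obtain ⟨B'', hB'', A', C', heq', hun', _, _, _⟩ := E'.split_mem e he'
    have hblk' : blockOf e = B'' := by rw [heq']; simpa [blockOf] using hun'
    rw [heq'] at hblk'
    rw [heq', hblk', restrict, Sym2.map_pair_eq,
      Finset.inter_eq_left.mpr (hun' ▸ Finset.subset_union_left),
      Finset.inter_eq_left.mpr (hun' ▸ Finset.subset_union_right)]
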